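/- (Horton's lemma) Let C be a cycle belonging to some minimum-weight cycle basis of a graph G with positive edge weights, and let u, v be two vertices lying on C. Then C contains a shortest path from u to v. -/

import Mathlib

open Finset
open scoped Classical symmDiff

variable {V : Type*}

/-- An edge set of a graph `G` in which every vertex has even degree (a cycle). -/
def IsCycleEdgeSet (G : SimpleGraph V) (s : Finset (Sym2 V)) : Prop :=
  ↑s ⊆ G.edgeSet ∧ ∀ v : V, Even (s.filter (fun e => v ∈ e)).card

/-- GF(2) incidence vector of an edge set. -/
noncomputable def indicVec (s : Finset (Sym2 V)) : Sym2 V → ZMod 2 :=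
  fun e => if e ∈ s then 1 else 0

/-- The cycle space of `G` over GF(2). -/
noncomputable def cycleSpace (G : SimpleGraph V) : Submodule (ZMod 2) (Sym2 V → ZMod 2) :=
  Submodule.span (ZMod 2) {x | ∃ s : Finset (Sym2 V), IsCycleEdgeSet G s ∧ x = indicVec s}

/-- Total weight of an edge set. -/
noncomputable def esWeight (w : Sym2 V → ℝ) (s : Finset (Sym2 V)) : ℝ :=
  ∑ e ∈ s, w e

/-- A cycle basis of `G`: a set of cycles whose GF(2) incidence vectors are linearly
independent and span the cycle space. -/
def IsCycleBasis (G : SimpleGraph V) (B : Finset (Finset (Sym2 V))) : Prop :=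
  (∀ c ∈ B, IsCycleEdgeSet G c) ∧
    LinearIndependent (ZMod 2) (fun c : B => indicVec (c : Finset (Sym2 V))) ∧
    Submodule.span (ZMod 2)
        (Set.range fun c : B => indicVec (c : Finset (Sym2 V))) = cycleSpace G

/-- A minimum cycle basis: a cycle basis of minimum total weight. -/
def IsMinCycleBasis (G : SimpleGraph V) (w : Sym2 V → ℝ)
    (B : Finset (Finset (Sym2 V))) : Prop :=
  IsCycleBasis G B ∧
    ∀ B', IsCycleBasis G B' → ∑ c ∈ B, esWeight w c ≤ ∑ c ∈ B', esWeight w c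

/-- Weight of a walk. -/
noncomputable def walkWeight (w : Sym2 V → ℝ) {G : SimpleGraph V} {u v : V}
    (p : G.Walk u v) : ℝ :=
  (p.edges.map w).sum

/-! ### Helper definitions -/

/-- the edges of `S` incident to `x` -/
noncomputable def inc (S : Finset (Sym2 V)) (x : V) : Finset (Sym2 V) :=
  S.filter (fun e => x ∈ e)

/-- the edges of `S` in the connected component (within `S`) of `u` -/
noncomputable def reachPart (S : Finset (Sym2 V)) (u : V) : Finset (Sym2 V) :=
  S.filter (fun e => ∃ y ∈ e, (SimpleGraph.fromEdgeSet (↑S : Set (Sym2 V))).Reachable u y)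

lemma inc_eq {x : V} (S : Finset (Sym2 V)) {inst : DecidablePred fun e : Sym2 V => x ∈ e} :
    inc S x = @Finset.filter _ _ inst S := by
  unfold inc; congr!

lemma cycleEdgeSet_iff {G : SimpleGraph V} {s : Finset (Sym2 V)} :
    IsCycleEdgeSet G s ↔ ↑s ⊆ G.edgeSet ∧ ∀ v : V, Even (inc s v).card := by
  unfold IsCycleEdgeSet
  constructor <;> (rintro ⟨h1, h2⟩; refine ⟨h1, fun x => ?_⟩)
  · rw [inc_eq]; exact h2 x
  · rw [← inc_eq s]; exact h2 x

lemma indicVec_inj : Function.Injective (indicVec (V := V)) := by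
  intro s t h
  ext e
  have := congrFun h e
  by_cases hs : e ∈ s <;> by_cases ht : e ∈ t <;> simp [indicVec, hs, ht] at this ⊢

lemma indicVec_symmDiff (s t : Finset (Sym2 V)) :
    indicVec (s ∆ t) = indicVec s + indicVec t := by
  funext e
  simp only [indicVec, Pi.add_apply, Finset.mem_symmDiff]
  by_cases hs : e ∈ s <;> by_cases ht : e ∈ t <;> simp [hs, ht] <;> decide

lemma inc_symmDiff (s t : Finset (Sym2 V)) (x : V) :
    inc (s ∆ t) x = (inc s x) ∆ (inc t x) := by
  unfold inc
  ext e; simp only [Finset.mem_symmDiff, Finset.mem_filter]; tauto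

lemma inc_sdiff (s t : Finset (Sym2 V)) (x : V) :
    inc (s \ t) x = inc s x \ inc t x := by
  unfold inc
  ext e; simp only [Finset.mem_sdiff, Finset.mem_filter]; tauto

lemma inc_subset_of_subset {s t : Finset (Sym2 V)} (h : s ⊆ t) (x : V) :
    inc s x ⊆ inc t x := Finset.filter_subset_filter _ h

lemma card_symmDiff_parity (s t : Finset (Sym2 V)) :
    (s ∆ t).card % 2 = (s.card + t.card) % 2 := by
  have h : s.card + t.card = (s ∆ t).card + 2 * (s ∩ t).card := by
    have h1 : (s ∪ t).card + (s ∩ t).card = s.card + t.card :=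
      Finset.card_union_add_card_inter s t
    have h2 : (s ∪ t).card = (s ∆ t).card + (s ∩ t).card := by
      rw [← Finset.card_union_of_disjoint]
      · congr 1
        ext e; simp [Finset.mem_symmDiff]; tauto
      · rw [Finset.disjoint_left]
        intro a ha hb
        simp [Finset.mem_symmDiff] at ha
        simp at hb
        tauto
    omega
  omega

lemma handshake [Fintype V] {G : SimpleGraph V} {S : Finset (Sym2 V)}
    (hS : ↑S ⊆ G.edgeSet) :
    ∑ x : V, (inc S x).card = 2 * S.card := by
  have h0 : ∑ x : V, (inc S x).card
      = ∑ e ∈ S, (Finset.univ.filter (fun x : V => x ∈ e)).card := by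
    unfold inc
    simp only [Finset.card_filter]
    rw [Finset.sum_comm]
  rw [h0]
  rw [Finset.sum_congr rfl (fun e he => ?_), Finset.sum_const, smul_eq_mul, mul_comm]
  have hd : ¬ e.IsDiag := G.not_isDiag_of_mem_edgeSet (hS he)
  induction e with
  | h a b =>
    simp only [Sym2.isDiag_iff_proj_eq] at hd
    have h1 : (Finset.univ.filter (fun x : V => x ∈ s(a,b))) = {a, b} := by
      ext x; simp [Sym2.mem_iff]
    rw [h1, Finset.card_insert_of_notMem (by simp [hd]), Finset.card_singleton]

lemma trail_parity {G : SimpleGraph V} {u v : V} (p : G.Walk u v) (hp : p.IsTrail) (x : V) :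
    (inc p.edges.toFinset x).card % 2
      = ((if x = u then 1 else 0) + (if x = v then 1 else 0)) % 2 := by
  unfold inc
  induction p with
  | nil => split_ifs <;> simp
  | @cons a b c h q ih =>
    rw [SimpleGraph.Walk.isTrail_cons] at hp
    have ih' := ih hp.1
    have hedges : (SimpleGraph.Walk.cons h q).edges.toFinset
        = insert s(a, b) q.edges.toFinset := by
      simp [SimpleGraph.Walk.edges_cons]
    rw [hedges, Finset.filter_insert]
    by_cases hx : x ∈ s(a, b)
    · rw [if_pos hx, Finset.card_insert_of_notMem (by simp [hp.2])]
      rw [Sym2.mem_iff] at hx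
      rcases hx with rfl | rfl
      · have hab : x ≠ b := fun hh => by subst hh; simp at h
        simp only [eq_self_iff_true, if_true, if_pos rfl]
        simp only [if_neg hab, eq_self_iff_true, if_true] at ih'
        by_cases hxc : x = c
        · rw [if_pos hxc] at ih' ⊢; omega
        · rw [if_neg hxc] at ih' ⊢; omega
      · have hab : x ≠ a := fun hh => by subst hh; simp at h
        simp only [if_pos rfl, eq_self_iff_true, if_true] at ih'
        simp only [if_neg hab]
        by_cases hxc : x = c
        · rw [if_pos hxc] at ih' ⊢; omega
        · rw [if_neg hxc] at ih' ⊢; omega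
    · rw [if_neg hx, ih']
      rw [Sym2.mem_iff] at hx
      push_neg at hx
      simp only [if_neg hx.1, if_neg hx.2]

lemma reach_of_mem_edge {S : Finset (Sym2 V)} {u x : V} {e : Sym2 V}
    (heS : e ∈ S) (hxe : x ∈ e)
    (hy : ∃ y ∈ e, (SimpleGraph.fromEdgeSet (↑S : Set (Sym2 V))).Reachable u y) :
    (SimpleGraph.fromEdgeSet (↑S : Set (Sym2 V))).Reachable u x := by
  obtain ⟨y, hye, hry⟩ := hy
  by_cases hxy : y = x
  · exact hxy ▸ hry
  · have he : e = s(y, x) := (Sym2.mem_and_mem_iff hxy).mp ⟨hye, hxe⟩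
    have hadj : (SimpleGraph.fromEdgeSet (↑S : Set (Sym2 V))).Adj y x := by
      rw [SimpleGraph.fromEdgeSet_adj]
      exact ⟨Finset.mem_coe.mpr (he ▸ heS), hxy⟩
    exact hry.trans hadj.reachable

lemma reachPart_subset (S : Finset (Sym2 V)) (u : V) : reachPart S u ⊆ S :=
  Finset.filter_subset _ _

lemma mem_reachPart {S : Finset (Sym2 V)} {u : V} {e : Sym2 V} :
    e ∈ reachPart S u ↔ e ∈ S ∧ ∃ y ∈ e, (SimpleGraph.fromEdgeSet (↑S : Set (Sym2 V))).Reachable u y := by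
  unfold reachPart
  exact Finset.mem_filter

lemma inc_reachPart (S : Finset (Sym2 V)) (u x : V) :
    inc (reachPart S u) x
      = if (SimpleGraph.fromEdgeSet (↑S : Set (Sym2 V))).Reachable u x then
          inc S x else ∅ := by
  unfold inc reachPart
  split_ifs with hr
  · ext e
    simp only [Finset.mem_filter, Finset.filter_filter]
    constructor
    · tauto
    · rintro ⟨heS, hxe⟩
      refine ⟨heS, ?_, hxe⟩
      exact ⟨x, hxe, hr⟩
  · ext e
    simp only [Finset.mem_filter, Finset.notMem_empty, iff_false]
    rintro ⟨⟨heS, hy⟩, hxe⟩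
    exact hr (reach_of_mem_edge heS hxe hy)

lemma reachable_of_odd [Fintype V] {G : SimpleGraph V} {S : Finset (Sym2 V)}
    (hS : ↑S ⊆ G.edgeSet) {u v : V}
    (hdu : ¬ Even (inc S u).card)
    (ho : ∀ x : V, x ≠ u → x ≠ v → Even (inc S x).card) :
    (SimpleGraph.fromEdgeSet (↑S : Set (Sym2 V))).Reachable u v := by
  by_contra hnr
  have hKsub : ↑(reachPart S u) ⊆ G.edgeSet :=
    fun e he => hS (Finset.mem_coe.mpr (reachPart_subset S u (Finset.mem_coe.mp he)))
  have hhs := handshake hKsub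
  have hsum : ∑ x : V, (inc (reachPart S u) x).card
      = (inc (reachPart S u) u).card + ∑ x ∈ Finset.univ.erase u, (inc (reachPart S u) x).card :=
    (Finset.add_sum_erase Finset.univ (fun x => (inc (reachPart S u) x).card)
      (Finset.mem_univ u)).symm
  have hu' : (inc (reachPart S u) u).card = (inc S u).card := by
    rw [inc_reachPart, if_pos (SimpleGraph.Reachable.refl u)]
  have herase : Even (∑ x ∈ Finset.univ.erase u, (inc (reachPart S u) x).card) := by
    apply Finset.even_sum
    intro x hx
    rw [inc_reachPart]
    split_ifs with hr
    · by_cases hxv : x = v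
      · exact absurd (hxv ▸ hr) hnr
      · exact ho x (Finset.ne_of_mem_erase hx) hxv
    · simp
  rw [hsum, hu'] at hhs
  have heven : Even (2 * (reachPart S u).card) := even_two_mul _
  rw [← hhs] at heven
  rcases herase with ⟨k, hk⟩
  rcases heven with ⟨m, hm⟩
  exact hdu ⟨m - k, by omega⟩

lemma exists_path_of_reachable {G : SimpleGraph V} {S : Finset (Sym2 V)}
    (hS : ↑S ⊆ G.edgeSet) {u v : V}
    (h : (SimpleGraph.fromEdgeSet (↑S : Set (Sym2 V))).Reachable u v) :
    ∃ p : G.Walk u v, p.IsPath ∧ ∀ e ∈ p.edges, e ∈ S := by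
  obtain ⟨p0⟩ := h
  let p1 := p0.toPath
  have hmem : ∀ e ∈ (p1 : (SimpleGraph.fromEdgeSet (↑S : Set (Sym2 V))).Walk u v).edges, e ∈ S := by
    intro e he
    have := (p1 : (SimpleGraph.fromEdgeSet (↑S : Set (Sym2 V))).Walk u v).edges_subset_edgeSet he
    rw [SimpleGraph.edgeSet_fromEdgeSet] at this
    exact Finset.mem_coe.mp this.1
  have hmem' : ∀ e ∈ (p1 : (SimpleGraph.fromEdgeSet (↑S : Set (Sym2 V))).Walk u v).edges,
      e ∈ G.edgeSet := fun e he => hS (Finset.mem_coe.mpr (hmem e he))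
  refine ⟨(p1 : (SimpleGraph.fromEdgeSet (↑S : Set (Sym2 V))).Walk u v).transfer G hmem', ?_, ?_⟩
  · exact p1.2.transfer hmem'
  · intro e he
    rw [SimpleGraph.Walk.edges_transfer] at he
    exact hmem e he

lemma indicVec_mem_cycleSpace {G : SimpleGraph V} {s : Finset (Sym2 V)}
    (hs : IsCycleEdgeSet G s) : indicVec s ∈ cycleSpace G :=
  Submodule.subset_span ⟨s, hs, rfl⟩

/-- For a finset `A` of cycle edge sets, the family over the subtype is independent iff
the image set of vectors is independent; we use the image-set route for the exchange. -/
lemma family_indep_iff (A : Finset (Finset (Sym2 V))) :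
    LinearIndependent (ZMod 2) (fun c : A => indicVec (c : Finset (Sym2 V)))
      ↔ LinearIndependent (ZMod 2)
          (fun x : (indicVec '' (↑A : Set (Finset (Sym2 V)))) => (x : Sym2 V → ZMod 2)) := by
  exact linearIndepOn_iff_image (R := ZMod 2) (f := indicVec)
    (s := (↑A : Set (Finset (Sym2 V)))) indicVec_inj.injOn

lemma range_family (A : Finset (Finset (Sym2 V))) :
    (Set.range fun c : A => indicVec (c : Finset (Sym2 V)))
      = indicVec '' (↑A : Set (Finset (Sym2 V))) := by
  ext x
  simp [Set.mem_image, Set.mem_range]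

/-- The exchange argument. -/
lemma exchange [Fintype V] {G : SimpleGraph V} {w : Sym2 V → ℝ}
    {B : Finset (Finset (Sym2 V))} (hB : IsMinCycleBasis G w B)
    {C : Finset (Sym2 V)} (hC : C ∈ B) {S₁ S₂ : Finset (Sym2 V)}
    (h1 : IsCycleEdgeSet G S₁) (h2 : IsCycleEdgeSet G S₂)
    (hsum : indicVec C = indicVec S₁ + indicVec S₂)
    (hw1 : esWeight w S₁ < esWeight w C) (hw2 : esWeight w S₂ < esWeight w C) :
    False := by
  obtain ⟨⟨hcyc, hind, hspan⟩, hmin⟩ := hB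
  set f : Finset (Sym2 V) → (Sym2 V → ZMod 2) := indicVec with hf
  -- the span of the other basis vectors
  set W₀ : Submodule (ZMod 2) (Sym2 V → ZMod 2)
    := Submodule.span (ZMod 2) (f '' ((↑B : Set (Finset (Sym2 V))) \ {C})) with hW₀
  have hCnot : f C ∉ W₀ := by
    have himg : (fun c : B => f (c : Finset (Sym2 V))) '' ({(⟨C, hC⟩ : B)}ᶜ)
        = f '' ((↑B : Set (Finset (Sym2 V))) \ {C}) := by
      ext x
      constructor
      · rintro ⟨⟨c, hcB⟩, hc, rfl⟩
        simp only [Set.mem_compl_iff, Set.mem_singleton_iff] at hc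
        refine ⟨c, ⟨hcB, fun hcc => hc (Subtype.ext (by simpa using hcc))⟩, rfl⟩
      · rintro ⟨c, ⟨hcB, hcC⟩, rfl⟩
        refine ⟨⟨c, hcB⟩, ?_, rfl⟩
        simp only [Set.mem_compl_iff, Set.mem_singleton_iff]
        intro hh
        exact hcC (by simpa using congrArg Subtype.val hh)
    have h := hind.notMem_span_image (s := {(⟨C, hC⟩ : B)}ᶜ)
      (x := (⟨C, hC⟩ : B)) (by simp)
    rw [himg] at h
    exact h
  -- one of S₁, S₂ is not in W₀
  have hkey : f S₁ ∉ W₀ ∨ f S₂ ∉ W₀ := by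
    by_contra hcon
    push_neg at hcon
    exact hCnot (hsum ▸ W₀.add_mem hcon.1 hcon.2)
  -- symmetric handling
  have main : ∀ S : Finset (Sym2 V), IsCycleEdgeSet G S → esWeight w S < esWeight w C →
      f S ∉ W₀ → False := by
    intro S hScyc hSw hSnot
    have hSnotB : S ∉ B.erase C := by
      intro hmem
      exact hSnot (Submodule.subset_span
        ⟨S, ⟨Finset.mem_coe.mpr (Finset.mem_of_mem_erase hmem),
          by simpa using Finset.ne_of_mem_erase hmem⟩, rfl⟩)
    set B' : Finset (Finset (Sym2 V)) := insert S (B.erase C) with hB'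
    have hcoeB' : (↑B' : Set (Finset (Sym2 V))) = insert S ((↑B : Set _) \ {C}) := by
      simp [hB', Finset.coe_insert, Finset.coe_erase]
    -- all elements are cycle edge sets
    have hcyc' : ∀ c ∈ B', IsCycleEdgeSet G c := by
      intro c hc
      rcases Finset.mem_insert.mp hc with rfl | hc
      · exact hScyc
      · exact hcyc c (Finset.mem_of_mem_erase hc)
    -- linear independence
    have hindB : LinearIndependent (ZMod 2)
        (fun x : (f '' (↑B : Set (Finset (Sym2 V)))) => (x : Sym2 V → ZMod 2)) :=
      (family_indep_iff B).mp hind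
    have himage : f '' ((↑B : Set _) \ {C}) ⊆ f '' (↑B : Set _) :=
      Set.image_mono Set.diff_subset
    have hindB0 : LinearIndependent (ZMod 2)
        (fun x : (f '' ((↑B : Set (Finset (Sym2 V))) \ {C})) => (x : Sym2 V → ZMod 2)) :=
      (show LinearIndepOn (ZMod 2) id _ from hindB).mono himage
    have hindB' : LinearIndependent (ZMod 2)
        (fun x : (f '' (↑B' : Set (Finset (Sym2 V)))) => (x : Sym2 V → ZMod 2)) := by
      rw [hcoeB', Set.image_insert_eq]
      exact (show LinearIndepOn (ZMod 2) id _ from hindB0).id_insert hSnot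
    have hind' : LinearIndependent (ZMod 2) (fun c : B' => f (c : Finset (Sym2 V))) :=
      (family_indep_iff B').mpr hindB'
    -- cardinalities
    have hcard : B'.card = B.card := by
      rw [hB', Finset.card_insert_of_notMem hSnotB, Finset.card_erase_of_mem hC]
      have : 0 < B.card := Finset.card_pos.mpr ⟨C, hC⟩
      omega
    -- span
    have hspan' : Submodule.span (ZMod 2)
        (Set.range fun c : B' => f (c : Finset (Sym2 V))) = cycleSpace G := by
      have hle : Submodule.span (ZMod 2)
          (Set.range fun c : B' => f (c : Finset (Sym2 V))) ≤ cycleSpace G := by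
        rw [Submodule.span_le]
        rintro x ⟨⟨c, hc⟩, rfl⟩
        exact indicVec_mem_cycleSpace (hcyc' c hc)
      have hfr1 : Module.finrank (ZMod 2)
          (Submodule.span (ZMod 2) (Set.range fun c : B' => f (c : Finset (Sym2 V))))
            = B.card := by
        rw [finrank_span_eq_card hind', Fintype.card_coe, hcard]
      have hfr2 : Module.finrank (ZMod 2) (cycleSpace G) = B.card := by
        rw [← hspan, finrank_span_eq_card hind, Fintype.card_coe]
      exact Submodule.eq_of_le_of_finrank_le hle (le_of_eq (hfr2.trans hfr1.symm))
    have hbasis' : IsCycleBasis G B' := ⟨hcyc', hind', hspan'⟩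
    have hle := hmin B' hbasis'
    have hsum' : ∑ c ∈ B', esWeight w c
        = esWeight w S + (∑ c ∈ B, esWeight w c - esWeight w C) := by
      rw [hB', Finset.sum_insert hSnotB]
      congr 1
      rw [← Finset.add_sum_erase B _ hC]
      ring
    rw [hsum'] at hle
    linarith
  rcases hkey with h | h
  · exact main S₁ h1 hw1 h
  · exact main S₂ h2 hw2 h

lemma nodup_sum_toFinset (w : Sym2 V → ℝ) (l : List (Sym2 V)) (h : l.Nodup) :
    (l.map w).sum = ∑ e ∈ l.toFinset, w e := by
  induction l with
  | nil => simp
  | cons a l ih =>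
    rw [List.nodup_cons] at h
    rw [List.map_cons, List.sum_cons, List.toFinset_cons,
      Finset.sum_insert (by simpa using h.1), ih h.2]

lemma walkWeight_eq_esWeight {G : SimpleGraph V} {u v : V} {w : Sym2 V → ℝ}
    {p : G.Walk u v} (hp : p.IsTrail) :
    walkWeight w p = esWeight w p.edges.toFinset :=
  nodup_sum_toFinset w p.edges hp.edges_nodup

lemma esWeight_mono {w : Sym2 V → ℝ} {A B : Finset (Sym2 V)} (hAB : A ⊆ B)
    (hnn : ∀ e ∈ B, 0 ≤ w e) : esWeight w A ≤ esWeight w B :=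
  Finset.sum_le_sum_of_subset_of_nonneg hAB (fun e he _ => hnn e he)

lemma esWeight_union_le {w : Sym2 V → ℝ} {A B : Finset (Sym2 V)}
    (hnn : ∀ e ∈ B, 0 ≤ w e) : esWeight w (A ∪ B) ≤ esWeight w A + esWeight w B := by
  unfold esWeight
  rw [← Finset.sum_union_inter]
  have : 0 ≤ ∑ e ∈ A ∩ B, w e :=
    Finset.sum_nonneg fun e he => hnn e (Finset.mem_of_mem_inter_right he)
  linarith

lemma esWeight_pos {G : SimpleGraph V} {w : Sym2 V → ℝ} (hw : ∀ e ∈ G.edgeSet, 0 < w e)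
    {A : Finset (Sym2 V)} (hA : ↑A ⊆ G.edgeSet) (hne : A.Nonempty) :
    0 < esWeight w A :=
  Finset.sum_pos (fun e he => hw e (hA (Finset.mem_coe.mpr he))) hne

lemma esWeight_sdiff {w : Sym2 V → ℝ} {A B : Finset (Sym2 V)} (h : A ⊆ B) :
    esWeight w (B \ A) + esWeight w A = esWeight w B :=
  Finset.sum_sdiff h

lemma symmDiff_sdiff_self (A B : Finset (Sym2 V)) (h : B ⊆ A) : B ∆ (A \ B) = A := by
  ext e
  simp only [Finset.mem_symmDiff, Finset.mem_sdiff]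
  constructor
  · rintro (⟨h1, h2⟩ | ⟨⟨h1, h2⟩, h3⟩)
    · exact h h1
    · exact h1
  · intro he
    by_cases hb : e ∈ B
    · exact Or.inl ⟨hb, fun hh => hh.2 hb⟩
    · exact Or.inr ⟨⟨he, hb⟩, hb⟩

/-- Horton's lemma: if `C` is a cycle in a minimum cycle basis of a graph with
positive edge weights and `u`, `v` are two vertices lying on `C`, then `C` contains
a shortest path from `u` to `v`, i.e. a path within `C` achieving the minimum
weight among all `u`–`v` paths in `G`. -/
theorem horton_lemma [Fintype V] (G : SimpleGraph V) (w : Sym2 V → ℝ)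
    (hw : ∀ e ∈ G.edgeSet, 0 < w e)
    (B : Finset (Finset (Sym2 V))) (hB : IsMinCycleBasis G w B)
    (C : Finset (Sym2 V)) (hC : C ∈ B)
    (u v : V) (hu : ∃ e ∈ C, u ∈ e) (hv : ∃ e ∈ C, v ∈ e) :
    ∃ p : G.Walk u v, p.IsPath ∧ (∀ e ∈ p.edges, e ∈ C) ∧
      ∀ q : G.Walk u v, q.IsPath → walkWeight w p ≤ walkWeight w q := by
  have hwnn : ∀ e ∈ G.edgeSet, 0 ≤ w e := fun e he => le_of_lt (hw e he)
  by_cases huv : u = v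
  · subst huv
    refine ⟨SimpleGraph.Walk.nil, SimpleGraph.Walk.IsPath.nil, by simp, ?_⟩
    intro q hq
    have : (⟨q, hq⟩ : G.Path u u) = SimpleGraph.Path.nil := SimpleGraph.Path.loop_eq _
    have hqnil : q = SimpleGraph.Walk.nil := congrArg Subtype.val this
    subst hqnil
    simp [walkWeight]
  -- basic facts about C
  have hCcyc : IsCycleEdgeSet G C := hB.1.1 C hC
  have hCsub : ↑C ⊆ G.edgeSet := hCcyc.1
  have hCeven : ∀ x : V, Even (inc C x).card := (cycleEdgeSet_iff.mp hCcyc).2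
  -- Step A : u and v are connected within C
  have reachA : (SimpleGraph.fromEdgeSet (↑C : Set (Sym2 V))).Reachable u v := by
    by_contra hnr
    set K := reachPart C u with hK
    have hKC : K ⊆ C := reachPart_subset C u
    have hKsub : ↑K ⊆ G.edgeSet := fun e he => hCsub (Finset.mem_coe.mpr (hKC (Finset.mem_coe.mp he)))
    have hDC : C \ K ⊆ C := Finset.sdiff_subset
    have hDsub : ↑(C \ K) ⊆ G.edgeSet := fun e he => hCsub (Finset.mem_coe.mpr (hDC (Finset.mem_coe.mp he)))
    have hKcyc : IsCycleEdgeSet G K := by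
      rw [cycleEdgeSet_iff]
      refine ⟨hKsub, fun x => ?_⟩
      rw [hK, inc_reachPart]
      split_ifs with hr
      · exact hCeven x
      · simp
    have hDcyc : IsCycleEdgeSet G (C \ K) := by
      rw [cycleEdgeSet_iff]
      refine ⟨hDsub, fun x => ?_⟩
      rw [inc_sdiff]
      rw [Finset.card_sdiff_of_subset (inc_subset_of_subset hKC x)]
      have h1 := hCeven x
      have h2 : Even (inc K x).card := by
        rw [hK, inc_reachPart]
        split_ifs with hr
        · exact hCeven x
        · simp
      rcases h1 with ⟨m, hm⟩
      rcases h2 with ⟨k, hk⟩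
      have hle : (inc K x).card ≤ (inc C x).card :=
        Finset.card_le_card (inc_subset_of_subset hKC x)
      exact ⟨m - k, by omega⟩
    have hsum : indicVec C = indicVec K + indicVec (C \ K) := by
      rw [← indicVec_symmDiff, symmDiff_sdiff_self C K hKC]
    have hKne : K.Nonempty := by
      obtain ⟨e, heC, hue⟩ := hu
      exact ⟨e, mem_reachPart.mpr ⟨heC, ⟨u, hue, SimpleGraph.Reachable.refl u⟩⟩⟩
    have hDne : (C \ K).Nonempty := by
      obtain ⟨e, heC, hve⟩ := hv
      refine ⟨e, Finset.mem_sdiff.mpr ⟨heC, fun hmem => ?_⟩⟩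
      have := (mem_reachPart.mp hmem).2
      exact hnr (reach_of_mem_edge heC hve this)
    have hsplit : esWeight w (C \ K) + esWeight w K = esWeight w C := esWeight_sdiff hKC
    have hKpos : 0 < esWeight w K := esWeight_pos hw hKsub hKne
    have hDpos : 0 < esWeight w (C \ K) := esWeight_pos hw hDsub hDne
    exact exchange hB hC hKcyc hDcyc hsum (by linarith) (by linarith)
  -- a path within C exists
  obtain ⟨pc, hpc_path, hpc_edges⟩ := exists_path_of_reachable hCsub reachA
  -- choose a minimum-weight path within C and a minimum-weight path overall
  set Pc : Finset (G.Path u v) :=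
    Finset.univ.filter (fun p => ∀ e ∈ (p : G.Walk u v).edges, e ∈ C) with hPc
  have hPcne : Pc.Nonempty :=
    ⟨⟨pc, hpc_path⟩, Finset.mem_filter.mpr ⟨Finset.mem_univ _, hpc_edges⟩⟩
  obtain ⟨P, hPmem, hPmin⟩ :=
    Finset.exists_min_image Pc (fun p => walkWeight w (p : G.Walk u v)) hPcne
  obtain ⟨Q, _, hQmin⟩ :=
    Finset.exists_min_image (Finset.univ : Finset (G.Path u v))
      (fun p => walkWeight w (p : G.Walk u v)) ⟨P, Finset.mem_univ _⟩
  have hPedges : ∀ e ∈ (P : G.Walk u v).edges, e ∈ C := (Finset.mem_filter.mp hPmem).2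
  refine ⟨(P : G.Walk u v), P.2, hPedges, ?_⟩
  intro q hq
  have hQq : walkWeight w (Q : G.Walk u v) ≤ walkWeight w q :=
    hQmin ⟨q, hq⟩ (Finset.mem_univ _)
  -- it suffices to show that P is no heavier than Q
  by_contra hcon
  push_neg at hcon
  have hlt : walkWeight w (Q : G.Walk u v) < walkWeight w (P : G.Walk u v) := by
    calc walkWeight w (Q : G.Walk u v) ≤ walkWeight w q := hQq
    _ < walkWeight w (P : G.Walk u v) := hcon
  -- edge sets of the two paths
  set Pf := (P : G.Walk u v).edges.toFinset with hPf
  set Qf := (Q : G.Walk u v).edges.toFinset with hQf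
  have hPfC : Pf ⊆ C := fun e he => hPedges e (List.mem_toFinset.mp he)
  have hPfG : ↑Pf ⊆ G.edgeSet := fun e he =>
    (P : G.Walk u v).edges_subset_edgeSet (List.mem_toFinset.mp (Finset.mem_coe.mp he))
  have hQfG : ↑Qf ⊆ G.edgeSet := fun e he =>
    (Q : G.Walk u v).edges_subset_edgeSet (List.mem_toFinset.mp (Finset.mem_coe.mp he))
  have hPpar := trail_parity (P : G.Walk u v) P.2.isTrail
  have hQpar := trail_parity (Q : G.Walk u v) Q.2.isTrail
  -- the complementary set D
  set D := C \ Pf with hD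
  have hDC : D ⊆ C := Finset.sdiff_subset
  have hDsub : ↑D ⊆ G.edgeSet := fun e he => hCsub (Finset.mem_coe.mpr (hDC (Finset.mem_coe.mp he)))
  have hincD : ∀ x : V, (inc D x).card = (inc C x).card - (inc Pf x).card := by
    intro x
    rw [hD, inc_sdiff, Finset.card_sdiff_of_subset (inc_subset_of_subset hPfC x)]
  have hincDle : ∀ x : V, (inc Pf x).card ≤ (inc C x).card := fun x =>
    Finset.card_le_card (inc_subset_of_subset hPfC x)
  -- D has odd degree exactly at u and v, so contains a u-v path P2
  have hDodd : ¬ Even (inc D u).card := by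
    have hpu : (inc Pf u).card % 2 = 1 := by
      have h := hPpar u
      rw [if_pos rfl, if_neg huv] at h
      simpa using h
    have hcu : (inc C u).card % 2 = 0 := Nat.even_iff.mp (hCeven u)
    have hle := hincDle u
    rw [Nat.even_iff, hincD u]
    omega
  have hDeven : ∀ x : V, x ≠ u → x ≠ v → Even (inc D x).card := by
    intro x hxu hxv
    have hpx : (inc Pf x).card % 2 = 0 := by
      have h := hPpar x
      rw [if_neg hxu, if_neg hxv] at h
      simpa using h
    have hcx : (inc C x).card % 2 = 0 := Nat.even_iff.mp (hCeven x)
    have hle := hincDle x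
    rw [Nat.even_iff, hincD x]
    omega
  have reachD : (SimpleGraph.fromEdgeSet (↑D : Set (Sym2 V))).Reachable u v :=
    reachable_of_odd hDsub hDodd hDeven
  obtain ⟨p2, hp2_path, hp2_edges⟩ := exists_path_of_reachable hDsub reachD
  have hp2C : ∀ e ∈ p2.edges, e ∈ C := fun e he => hDC (hp2_edges e he)
  have hP2mem : (⟨p2, hp2_path⟩ : G.Path u v) ∈ Pc :=
    Finset.mem_filter.mpr ⟨Finset.mem_univ _, hp2C⟩
  have hPP2 : walkWeight w (P : G.Walk u v) ≤ walkWeight w p2 :=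
    hPmin _ hP2mem
  -- weights as edge-set weights
  have hwP : walkWeight w (P : G.Walk u v) = esWeight w Pf :=
    walkWeight_eq_esWeight P.2.isTrail
  have hwQ : walkWeight w (Q : G.Walk u v) = esWeight w Qf :=
    walkWeight_eq_esWeight Q.2.isTrail
  have hwP2 : walkWeight w p2 = esWeight w p2.edges.toFinset :=
    walkWeight_eq_esWeight hp2_path.isTrail
  have hP2D : p2.edges.toFinset ⊆ D := fun e he => hp2_edges e (List.mem_toFinset.mp he)
  have hwDnn : ∀ e ∈ D, 0 ≤ w e := fun e he => hwnn e (hDsub (Finset.mem_coe.mpr he))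
  have hwQnn : ∀ e ∈ Qf, 0 ≤ w e := fun e he => hwnn e (hQfG (Finset.mem_coe.mpr he))
  have hP2leD : esWeight w p2.edges.toFinset ≤ esWeight w D := esWeight_mono hP2D hwDnn
  -- the two exchange cycles
  set S1 := Pf ∆ Qf with hS1
  set S2 := C ∆ S1 with hS2
  have hS1sub : ↑S1 ⊆ G.edgeSet := by
    intro e he
    rcases Finset.mem_symmDiff.mp (Finset.mem_coe.mp he) with ⟨h1, _⟩ | ⟨h1, _⟩
    · exact hPfG (Finset.mem_coe.mpr h1)
    · exact hQfG (Finset.mem_coe.mpr h1)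
  have hS1even : ∀ x : V, Even (inc S1 x).card := by
    intro x
    rw [hS1, inc_symmDiff]
    rw [Nat.even_iff, card_symmDiff_parity]
    have h3 : (inc Pf x).card % 2 = (inc Qf x).card % 2 := by
      rw [hPf, hQf, hPpar x, hQpar x]
    omega
  have hS1cyc : IsCycleEdgeSet G S1 := cycleEdgeSet_iff.mpr ⟨hS1sub, hS1even⟩
  have hS2sub : ↑S2 ⊆ G.edgeSet := by
    intro e he
    rcases Finset.mem_symmDiff.mp (Finset.mem_coe.mp he) with ⟨h1, _⟩ | ⟨h1, _⟩
    · exact hCsub (Finset.mem_coe.mpr h1)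
    · exact hS1sub (Finset.mem_coe.mpr h1)
  have hS2cyc : IsCycleEdgeSet G S2 := by
    rw [cycleEdgeSet_iff]
    refine ⟨hS2sub, fun x => ?_⟩
    rw [hS2, inc_symmDiff, Nat.even_iff, card_symmDiff_parity]
    have h1 := hCeven x
    have h2 := hS1even x
    rw [Nat.even_iff] at h1 h2
    omega
  have hvecsum : indicVec C = indicVec S1 + indicVec S2 := by
    have h2 : indicVec S2 = indicVec C + indicVec S1 := by
      rw [hS2, indicVec_symmDiff]
    rw [h2]
    funext e
    simp only [Pi.add_apply]
    have : indicVec S1 e + indicVec S1 e = 0 := by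
      unfold indicVec
      split_ifs <;> decide
    have hcomm : indicVec S1 e + (indicVec C e + indicVec S1 e)
        = indicVec C e + (indicVec S1 e + indicVec S1 e) := by ring
    rw [hcomm, this, add_zero]
  -- weight bounds
  have hCsplit : esWeight w D + esWeight w Pf = esWeight w C := esWeight_sdiff hPfC
  have hS1w : esWeight w S1 < esWeight w C := by
    have hsub : S1 ⊆ Pf ∪ Qf := by
      intro e he
      rcases Finset.mem_symmDiff.mp he with ⟨h1, _⟩ | ⟨h1, _⟩
      · exact Finset.mem_union_left _ h1
      · exact Finset.mem_union_right _ h1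
    have h1 : esWeight w S1 ≤ esWeight w (Pf ∪ Qf) :=
      esWeight_mono hsub (fun e he => by
        rcases Finset.mem_union.mp he with h | h
        · exact hwnn e (hPfG (Finset.mem_coe.mpr h))
        · exact hwnn e (hQfG (Finset.mem_coe.mpr h)))
    have h2 : esWeight w (Pf ∪ Qf) ≤ esWeight w Pf + esWeight w Qf :=
      esWeight_union_le hwQnn
    rw [hwP, hwQ] at hlt
    rw [hwP, hwP2] at hPP2
    linarith
  have hS2w : esWeight w S2 < esWeight w C := by
    have hsub : S2 ⊆ D ∪ Qf := by
      intro e he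
      rcases Finset.mem_symmDiff.mp he with ⟨h1, h2⟩ | ⟨h1, h2⟩
      · by_cases hp : e ∈ Pf
        · refine Finset.mem_union_right _ ?_
          by_contra hq
          exact h2 (Finset.mem_symmDiff.mpr (Or.inl ⟨hp, hq⟩))
        · exact Finset.mem_union_left _ (Finset.mem_sdiff.mpr ⟨h1, hp⟩)
      · rcases Finset.mem_symmDiff.mp h1 with ⟨h3, _⟩ | ⟨h3, _⟩
        · exact absurd (hPfC h3) h2
        · exact Finset.mem_union_right _ h3
    have h1 : esWeight w S2 ≤ esWeight w (D ∪ Qf) :=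
      esWeight_mono hsub (fun e he => by
        rcases Finset.mem_union.mp he with h | h
        · exact hwDnn e h
        · exact hwQnn e h)
    have h2 : esWeight w (D ∪ Qf) ≤ esWeight w D + esWeight w Qf :=
      esWeight_union_le hwQnn
    rw [hwP, hwQ] at hlt
    linarith
  exact exchange hB hC hS1cyc hS2cyc hvecsum hS1w hS2w
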